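/- For all 0 ≤ t ≤ θ and every integrable F_θ-measurable random variable φ_θ, one has P(τ > t, E_P[S_t | F^D_t] = 0) = 0 and, P-almost surely, E_P[φ_θ 1_{τ > θ} | G^D_t] = 1_{τ > t} · E_P[φ_θ S_θ | F^D_t] / E_P[S_t | F^D_t], where the right-hand side is taken to be 0 on the event {τ ≤ t}. (First formula of Proposition 4.2: the key lemma for the delayed-information investor.) -/

import Mathlib

open MeasureTheory ProbabilityTheory Set
open scoped NNReal Classical

noncomputable section

/-- Running infimum `X*_t = inf_{s ≤ t} X_s` of the process `X` over the time interval
`[0, t]`. -/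
def runInf {Ω : Type*} (X : ℝ≥0 → Ω → ℝ) (t : ℝ≥0) (ω : Ω) : ℝ :=
  ⨅ s : Set.Icc (0 : ℝ≥0) t, X s.1 ω

/-- The σ-algebra `σ({τ ≤ s} : s ≤ t)` generated by the default observations up to time
`t`. -/
def defaultSigma {Ω : Type*} (τ : Ω → ℝ≥0) (t : ℝ≥0) : MeasurableSpace Ω :=
  MeasurableSpace.generateFrom {A | ∃ s ≤ t, A = {ω | τ ω ≤ s}}

/-- The Azéma supermartingale `S_t = P(τ > t | F_t)` of `τ`. -/
def azema {Ω : Type*} [m0 : MeasurableSpace Ω] (P : Measure Ω) (F : Filtration ℝ≥0 m0)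
    (τ : Ω → ℝ≥0) (t : ℝ≥0) : Ω → ℝ :=
  P[fun ω => if t < τ ω then (1 : ℝ) else 0|F t]

lemma measurable_runInf {Ω : Type*} [m0 : MeasurableSpace Ω] (X : ℝ≥0 → Ω → ℝ)
    (hc : ∀ ω, Continuous fun s => X s ω) (hm : ∀ s, Measurable (X s)) (u : ℝ≥0) :
    Measurable (runInf X u) := by
  have hne : Nonempty (Set.Icc (0 : ℝ≥0) u) := ⟨⟨0, le_refl _, zero_le⟩⟩
  apply measurable_of_Iio
  intro c
  have hkey : runInf X u ⁻¹' Iio c =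
      ⋃ q : ℚ, {ω | X (min (Real.toNNReal q) u) ω < c} := by
    ext ω
    simp only [mem_preimage, mem_Iio, mem_iUnion, mem_setOf_eq]
    constructor
    · intro hlt
      obtain ⟨s, hs⟩ := exists_lt_of_ciInf_lt hlt
      have hV : IsOpen ((fun r : ℝ≥0 => X r ω) ⁻¹' Iio c) := (hc ω).isOpen_preimage _ isOpen_Iio
      obtain ⟨ε, hε, hball⟩ := Metric.isOpen_iff.1 hV s.1 hs
      obtain ⟨q, hq1, hq2⟩ := exists_rat_btwn (lt_add_of_pos_right (s.1 : ℝ) hε)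
      have hq0 : (0 : ℝ) ≤ q := le_trans s.1.coe_nonneg hq1.le
      refine ⟨q, ?_⟩
      set p : ℝ≥0 := min (Real.toNNReal q) u with hp
      have hsp : s.1 ≤ p := by
        apply le_min _ s.2.2
        rw [← NNReal.coe_le_coe, Real.coe_toNNReal q hq0]
        exact hq1.le
      have hpq : (p : ℝ) < (s.1 : ℝ) + ε := by
        calc (p : ℝ) ≤ (Real.toNNReal q : ℝ) := by exact_mod_cast min_le_left _ _
        _ = q := Real.coe_toNNReal q hq0
        _ < (s.1 : ℝ) + ε := hq2
      have : p ∈ Metric.ball s.1 ε := by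
        rw [Metric.mem_ball, NNReal.dist_eq, abs_of_nonneg (sub_nonneg.2 (NNReal.coe_le_coe.2 hsp))]
        linarith
      exact hball this
    · rintro ⟨q, hq⟩
      have hmem : min (Real.toNNReal q) u ∈ Set.Icc (0 : ℝ≥0) u := ⟨zero_le, min_le_right _ _⟩
      have hbdd : BddBelow (Set.range fun s : Set.Icc (0 : ℝ≥0) u => X s.1 ω) := by
        have hcomp : IsCompact ((fun s => X s ω) '' Set.Icc (0:ℝ≥0) u) :=
          isCompact_Icc.image_of_continuousOn (hc ω).continuousOn
        refine BddBelow.mono ?_ hcomp.bddBelow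
        rintro _ ⟨s, rfl⟩
        exact ⟨s.1, s.2, rfl⟩
      exact lt_of_le_of_lt (ciInf_le hbdd ⟨_, hmem⟩) hq
  rw [hkey]
  exact MeasurableSet.iUnion fun q => (hm _) measurableSet_Iio

lemma sm_div_aux {Ω : Type*} {m : MeasurableSpace Ω} {f g : Ω → ℝ}
    (hf : StronglyMeasurable[m] f) (hg : StronglyMeasurable[m] g) :
    StronglyMeasurable[m] fun ω => f ω / g ω :=
  (hf.measurable.div hg.measurable).stronglyMeasurable

lemma sm_min_abs_aux {Ω : Type*} {m : MeasurableSpace Ω} {f : Ω → ℝ}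
    (hf : StronglyMeasurable[m] f) (c : ℝ) :
    StronglyMeasurable[m] fun ω => min |f ω| c :=
  ((hf.measurable.abs).min measurable_const).stronglyMeasurable

def piSys {Ω : Type*} (mD : MeasurableSpace Ω) (τ : Ω → ℝ≥0) (t : ℝ≥0) : Set (Set Ω) :=
  {s | ∃ B : Set Ω, MeasurableSet[mD] B ∧
    (s = B ∨ ∃ u : ℝ≥0, u ≤ t ∧ s = B ∩ {ω | τ ω ≤ u})}

lemma key_aux {Ω : Type*} [m0 : MeasurableSpace Ω] {P : Measure Ω} [IsProbabilityMeasure P]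
    (mF mFθ mD : MeasurableSpace Ω) (hDF : mD ≤ mF) (hFθ : mF ≤ mFθ) (hθ0 : mFθ ≤ m0)
    (τ : Ω → ℝ≥0) (t θ : ℝ≥0) (htθ : t ≤ θ)
    (hτset : ∀ u : ℝ≥0, MeasurableSet[m0] {ω | u < τ ω})
    (φ : Ω → ℝ) (hφ_meas : Measurable[mFθ] φ) (hφ_int : Integrable φ P) :
    P {ω | t < τ ω ∧
        (P[P[fun ω' => if t < τ ω' then (1:ℝ) else 0|mF]|mD]) ω = 0} = 0 ∧
    (P[fun ω => φ ω * (if θ < τ ω then 1 else 0)|mD ⊔ defaultSigma τ t]) =ᵐ[P]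
      fun ω => if t < τ ω then
        (P[fun ω' => φ ω' * (P[fun ω'' => if θ < τ ω'' then (1:ℝ) else 0|mFθ]) ω'|mD]) ω /
          (P[P[fun ω' => if t < τ ω' then (1:ℝ) else 0|mF]|mD]) ω
      else 0 := by
  letI _inst : MeasurableSpace Ω := m0
  -- σ-algebra inequalities
  have hF0 : mF ≤ m0 := hFθ.trans hθ0
  have hD0 : mD ≤ m0 := hDF.trans hF0
  have hDθ : mD ≤ mFθ := hDF.trans hFθ
  have hτle : ∀ u : ℝ≥0, MeasurableSet[m0] {ω | τ ω ≤ u} := by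
    intro u
    have : {ω | τ ω ≤ u} = {ω | u < τ ω}ᶜ := by ext ω; simp [not_lt]
    rw [this]; exact (hτset u).compl
  have hG_le : (mD ⊔ defaultSigma τ t) ≤ m0 := by
    refine sup_le hD0 (MeasurableSpace.generateFrom_le ?_)
    rintro A ⟨u, hu, rfl⟩
    exact hτle u
  -- indicators
  set It : Ω → ℝ := fun ω => if t < τ ω then 1 else 0 with hIt_def
  set Iθ : Ω → ℝ := fun ω => if θ < τ ω then 1 else 0 with hIθ_def
  have hIt_nonneg : ∀ ω, 0 ≤ It ω := fun ω => by by_cases h : t < τ ω <;> simp [hIt_def, h]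
  have hIθ_nonneg : ∀ ω, 0 ≤ Iθ ω := fun ω => by by_cases h : θ < τ ω <;> simp [hIθ_def, h]
  have hIt_le_one : ∀ ω, It ω ≤ 1 := fun ω => by by_cases h : t < τ ω <;> simp [hIt_def, h]
  have hIθ_le_It : ∀ ω, Iθ ω ≤ It ω := by
    intro ω
    by_cases h : θ < τ ω
    · simp [hIθ_def, hIt_def, h, lt_of_le_of_lt htθ h]
    · simp only [hIθ_def, if_neg h]; exact hIt_nonneg ω
  have hItm : Measurable[m0] It := Measurable.ite (hτset t) measurable_const measurable_const
  have hIθm : Measurable[m0] Iθ := Measurable.ite (hτset θ) measurable_const measurable_const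
  have hIt_int : Integrable It P := by
    refine Integrable.mono' (integrable_const 1) hItm.aestronglyMeasurable ?_
    refine ae_of_all _ fun ω => ?_
    rw [Real.norm_eq_abs, abs_of_nonneg (hIt_nonneg ω)]; exact hIt_le_one ω
  have hIθ_int : Integrable Iθ P := by
    refine Integrable.mono' (integrable_const 1) hIθm.aestronglyMeasurable ?_
    refine ae_of_all _ fun ω => ?_
    rw [Real.norm_eq_abs, abs_of_nonneg (hIθ_nonneg ω)]
    exact (hIθ_le_It ω).trans (hIt_le_one ω)
  -- conditional quantities
  set St : Ω → ℝ := P[It|mF] with hSt_def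
  set Sθ : Ω → ℝ := P[Iθ|mFθ] with hSθ_def
  set D : Ω → ℝ := P[St|mD] with hD_def
  have hSt_int : Integrable St P := integrable_condExp
  have hSθ_int : Integrable Sθ P := integrable_condExp
  have hD_int : Integrable D P := integrable_condExp
  have hSt_nonneg : 0 ≤ᵐ[P] St := condExp_nonneg (ae_of_all _ hIt_nonneg)
  have hSθ_nonneg : 0 ≤ᵐ[P] Sθ := condExp_nonneg (ae_of_all _ hIθ_nonneg)
  have hD_nonneg : 0 ≤ᵐ[P] D := condExp_nonneg hSt_nonneg
  have hSθ_le_one : Sθ ≤ᵐ[P] fun _ => (1:ℝ) := by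
    have h1 : Sθ ≤ᵐ[P] P[fun _ => (1:ℝ)|mFθ] :=
      condExp_mono hIθ_int (integrable_const 1)
        (ae_of_all _ fun ω => (hIθ_le_It ω).trans (hIt_le_one ω))
    have h2 : P[fun _ => (1:ℝ)|mFθ] = fun _ => (1:ℝ) := condExp_const hθ0 1
    rw [h2] at h1; exact h1
  have hSθm : Measurable[m0] Sθ :=
    (stronglyMeasurable_condExp.mono hθ0).measurable
  have hStm : Measurable[m0] St := (stronglyMeasurable_condExp.mono hF0).measurable
  have hφSθ_int : Integrable (fun ω => φ ω * Sθ ω) P := by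
    refine Integrable.mono' hφ_int.abs
      (((hφ_meas.mono hθ0 le_rfl).mul hSθm).aestronglyMeasurable) ?_
    filter_upwards [hSθ_nonneg, hSθ_le_one] with ω h0 h1
    rw [Real.norm_eq_abs, abs_mul]
    calc |φ ω| * |Sθ ω| ≤ |φ ω| * 1 := by
          refine mul_le_mul_of_nonneg_left ?_ (abs_nonneg _)
          rw [abs_of_nonneg h0]; exact h1
      _ = |φ ω| := mul_one _
  set N : Ω → ℝ := P[fun ω => φ ω * Sθ ω|mD] with hN_def
  have hN_int : Integrable N P := integrable_condExp
  -- f and its integrability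
  set f : Ω → ℝ := fun ω => φ ω * Iθ ω with hf_def
  have hf_int : Integrable f P := by
    refine Integrable.mono' hφ_int.abs
      (((hφ_meas.mono hθ0 le_rfl).mul hIθm).aestronglyMeasurable) ?_
    refine ae_of_all _ fun ω => ?_
    rw [Real.norm_eq_abs, abs_mul]
    calc |φ ω| * |Iθ ω| ≤ |φ ω| * 1 := by
          refine mul_le_mul_of_nonneg_left ?_ (abs_nonneg _)
          rw [abs_of_nonneg (hIθ_nonneg ω)]
          exact (hIθ_le_It ω).trans (hIt_le_one ω)
      _ = |φ ω| := mul_one _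
  -- the zero set of D
  set A : Set Ω := {ω | D ω = 0} with hA_def
  have hA_mD : MeasurableSet[mD] A := by
    have : Measurable[mD] D := stronglyMeasurable_condExp.measurable
    exact this (measurableSet_singleton 0)
  have hAm0 : MeasurableSet[m0] A := hD0 _ hA_mD
  -- ∫_A St = 0
  have hIntA_St : ∫ ω in A, St ω ∂P = 0 := by
    have h1 : ∫ ω in A, D ω ∂P = ∫ ω in A, St ω ∂P := setIntegral_condExp hD0 hSt_int hA_mD
    rw [← h1]
    calc ∫ ω in A, D ω ∂P = ∫ ω in A, (0:ℝ) ∂P :=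
          setIntegral_congr_fun hAm0 fun ω hω => hω
      _ = 0 := integral_zero _ _
  have hSt_res : St =ᵐ[P.restrict A] 0 := by
    refine (integral_eq_zero_iff_of_nonneg_ae (ae_restrict_of_ae hSt_nonneg)
      hSt_int.integrableOn).1 hIntA_St
  -- part 1
  have part1 : P ({ω | t < τ ω} ∩ A) = 0 := by
    have h4 : ∫ ω in A, It ω ∂P = 0 := by
      rw [← setIntegral_condExp hF0 hIt_int (hDF _ hA_mD)]
      rw [← hSt_def, integral_congr_ae hSt_res]
      simp
    have h5 : ∫ ω in A, It ω ∂P = (P ({ω | t < τ ω} ∩ A)).toReal := by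
      calc ∫ ω in A, It ω ∂P
          = ∫ ω in A, Set.indicator {ω | t < τ ω} (fun _ => (1:ℝ)) ω ∂P := by
            refine integral_congr_ae (ae_of_all _ fun ω => ?_)
            by_cases h : t < τ ω <;> simp [hIt_def, h, Set.indicator_apply]
        _ = ∫ ω in A ∩ {ω | t < τ ω}, (1:ℝ) ∂P := setIntegral_indicator (hτset t)
        _ = (P (A ∩ {ω | t < τ ω})).toReal := by rw [setIntegral_const]; simp [Measure.real]
        _ = (P ({ω | t < τ ω} ∩ A)).toReal := by rw [Set.inter_comm]
    rw [h4] at h5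
    have hfin : P ({ω | t < τ ω} ∩ A) ≠ ⊤ := measure_ne_top P _
    exact ((ENNReal.toReal_eq_zero_iff _).1 h5.symm).resolve_right hfin
  -- Sθ vanishes a.e. on A
  have hSθ_res : Sθ =ᵐ[P.restrict A] 0 := by
    have hc1 : P[Sθ|mF] =ᵐ[P] P[Iθ|mF] := condExp_condExp_of_le hFθ hθ0
    have hc2 : P[Iθ|mF] ≤ᵐ[P] St :=
      condExp_mono hIθ_int hIt_int (ae_of_all _ hIθ_le_It)
    have hble : P[Sθ|mF] ≤ᵐ[P] St := by
      filter_upwards [hc1, hc2] with ω h1 h2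
      rw [h1]; exact h2
    have h6 : ∫ ω in A, Sθ ω ∂P ≤ 0 := by
      rw [← setIntegral_condExp hF0 hSθ_int (hDF _ hA_mD)]
      calc ∫ ω in A, (P[Sθ|mF]) ω ∂P ≤ ∫ ω in A, St ω ∂P :=
            setIntegral_mono_ae integrable_condExp.integrableOn hSt_int.integrableOn hble
        _ = 0 := hIntA_St
    have h7 : 0 ≤ ∫ ω in A, Sθ ω ∂P :=
      integral_nonneg_of_ae (ae_restrict_of_ae hSθ_nonneg)
    exact (integral_eq_zero_iff_of_nonneg_ae (ae_restrict_of_ae hSθ_nonneg)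
      hSθ_int.integrableOn).1 (le_antisymm h6 h7)
  -- ∫ over B ∩ A of N vanishes
  have hNA : ∀ B : Set Ω, MeasurableSet[mD] B → ∫ ω in B ∩ A, N ω ∂P = 0 := by
    intro B hB
    rw [setIntegral_condExp hD0 hφSθ_int (hB.inter hA_mD)]
    have hz : (fun ω => φ ω * Sθ ω) =ᵐ[P.restrict (B ∩ A)] 0 := by
      have := ae_restrict_of_ae_restrict_of_subset (Set.inter_subset_right : B ∩ A ⊆ A) hSθ_res
      filter_upwards [this] with ω hω
      simp [hω]
    rw [integral_congr_ae hz]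
    simp
  -- the pull-out helper
  have main : ∀ k : Ω → ℝ, StronglyMeasurable[mD] k →
      Integrable (fun ω => k ω * It ω) P → Integrable (fun ω => k ω * St ω) P →
      (∫ ω, k ω * It ω ∂P = ∫ ω, k ω * St ω ∂P) ∧
      (∫ ω, k ω * St ω ∂P = ∫ ω, k ω * D ω ∂P) := by
    intro k hk hk1 hk2
    constructor
    · have hpull : P[(fun ω => k ω * It ω)|mF] =ᵐ[P] fun ω => k ω * St ω :=
        condExp_mul_of_stronglyMeasurable_left (hk.mono hDF) hk1 hIt_int
      calc ∫ ω, k ω * It ω ∂P = ∫ ω, (P[(fun ω => k ω * It ω)|mF]) ω ∂P :=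
            (integral_condExp hF0).symm
        _ = ∫ ω, k ω * St ω ∂P := integral_congr_ae hpull
    · have hpull : P[(fun ω => k ω * St ω)|mD] =ᵐ[P] fun ω => k ω * D ω :=
        condExp_mul_of_stronglyMeasurable_left hk hk2 hSt_int
      calc ∫ ω, k ω * St ω ∂P = ∫ ω, (P[(fun ω => k ω * St ω)|mD]) ω ∂P :=
            (integral_condExp hD0).symm
        _ = ∫ ω, k ω * D ω ∂P := integral_congr_ae hpull
  -- h = N / D and friends
  set h : Ω → ℝ := fun ω => N ω / D ω with hh_def
  have hh_sm : StronglyMeasurable[mD] h :=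
    sm_div_aux stronglyMeasurable_condExp stronglyMeasurable_condExp
  have hh_m0 : Measurable[m0] h := (hh_sm.mono hD0).measurable
  set Sp : Ω → ℝ := fun ω => max (St ω) 0 with hSp_def
  have hSpm : Measurable[m0] Sp := hStm.max measurable_const
  have hSp_nonneg : ∀ ω, 0 ≤ Sp ω := fun ω => le_max_right _ _
  have hSp_le_abs : ∀ ω, Sp ω ≤ |St ω| := fun ω => max_le (le_abs_self _) (abs_nonneg _)
  have hSp_ae : Sp =ᵐ[P] St := by
    filter_upwards [hSt_nonneg] with ω h0
    exact max_eq_left h0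
  set kn : ℕ → Ω → ℝ := fun n ω => min |h ω| (n : ℝ) with hkn_def
  have hkn_m0 : ∀ n, Measurable[m0] (kn n) := fun n => (hh_m0.abs).min measurable_const
  have hkn_sm : ∀ n, StronglyMeasurable[mD] (kn n) := fun n => sm_min_abs_aux hh_sm _
  have hkn_nonneg : ∀ n ω, 0 ≤ kn n ω := fun n ω => le_min (abs_nonneg _) (Nat.cast_nonneg n)
  have hkn_le_cast : ∀ n ω, kn n ω ≤ (n:ℝ) := fun n ω => min_le_right _ _
  have hkn_le_abs : ∀ n ω, kn n ω ≤ |h ω| := fun n ω => min_le_left _ _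
  have hkn_int_It : ∀ n, Integrable (fun ω => kn n ω * It ω) P := by
    intro n
    refine Integrable.mono' (integrable_const (n:ℝ))
      (((hkn_m0 n).mul hItm).aestronglyMeasurable) (ae_of_all _ fun ω => ?_)
    rw [Real.norm_eq_abs, abs_mul, abs_of_nonneg (hkn_nonneg n ω), abs_of_nonneg (hIt_nonneg ω)]
    calc kn n ω * It ω ≤ (n:ℝ) * 1 :=
          mul_le_mul (hkn_le_cast n ω) (hIt_le_one ω) (hIt_nonneg ω) (Nat.cast_nonneg n)
      _ = (n:ℝ) := mul_one _
  have hkn_int_St : ∀ n, Integrable (fun ω => kn n ω * St ω) P := by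
    intro n
    refine Integrable.mono' ((hSt_int.abs).const_mul (n:ℝ))
      (((hkn_m0 n).mul hStm).aestronglyMeasurable) (ae_of_all _ fun ω => ?_)
    rw [Real.norm_eq_abs, abs_mul, abs_of_nonneg (hkn_nonneg n ω)]
    exact mul_le_mul_of_nonneg_right (hkn_le_cast n ω) (abs_nonneg _)
  have hknD_le : ∀ n, ∀ᵐ ω ∂P, kn n ω * D ω ≤ |N ω| := by
    intro n
    filter_upwards [hD_nonneg] with ω h0
    rcases eq_or_lt_of_le h0 with h0' | h0'
    · have hd : D ω = 0 := by simpa using h0'.symm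
      rw [hd, mul_zero]; exact abs_nonneg _
    · have habs : |h ω| = |N ω| / D ω := by
        rw [hh_def]; dsimp only; rw [abs_div, abs_of_pos h0']
      calc kn n ω * D ω ≤ |h ω| * D ω :=
            mul_le_mul_of_nonneg_right (hkn_le_abs n ω) h0'.le
        _ = |N ω| / D ω * D ω := by rw [habs]
        _ = |N ω| := div_mul_cancel₀ _ h0'.ne'
  have hDm0 : Measurable[m0] D := (stronglyMeasurable_condExp.mono hD0).measurable
  have hknD_int : ∀ n, Integrable (fun ω => kn n ω * D ω) P := by
    intro n
    refine Integrable.mono' ((hD_int.abs).const_mul (n:ℝ))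
      (((hkn_m0 n).mul hDm0).aestronglyMeasurable) (ae_of_all _ fun ω => ?_)
    rw [Real.norm_eq_abs, abs_mul, abs_of_nonneg (hkn_nonneg n ω)]
    exact mul_le_mul_of_nonneg_right (hkn_le_cast n ω) (abs_nonneg _)
  have hbound : ∀ n, ∫ ω, kn n ω * It ω ∂P ≤ ∫ ω, |N ω| ∂P := by
    intro n
    rw [(main (kn n) (hkn_sm n) (hkn_int_It n) (hkn_int_St n)).1,
        (main (kn n) (hkn_sm n) (hkn_int_It n) (hkn_int_St n)).2]
    exact integral_mono_ae (hknD_int n) hN_int.abs (hknD_le n)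
  -- monotone convergence auxiliary
  have hMCT : ∀ w : Ω → ℝ, Measurable[m0] w → (∀ ω, 0 ≤ w ω) →
      (∀ n, Integrable (fun ω => kn n ω * w ω) P) →
      (∀ n, ∫ ω, kn n ω * w ω ∂P ≤ ∫ ω, |N ω| ∂P) →
      Integrable (fun ω => |h ω| * w ω) P := by
    intro w hwm hw0 hwint hwle
    constructor
    · exact ((hh_m0.abs.mul hwm)).aestronglyMeasurable
    · rw [hasFiniteIntegral_iff_ofReal (ae_of_all _ fun ω => mul_nonneg (abs_nonneg _) (hw0 ω))]
      have hpt : ∀ ω, (⨆ n : ℕ, ENNReal.ofReal (kn n ω * w ω))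
          = ENNReal.ofReal (|h ω| * w ω) := by
        intro ω
        apply le_antisymm
        · exact iSup_le fun n => ENNReal.ofReal_le_ofReal
            (mul_le_mul_of_nonneg_right (hkn_le_abs n ω) (hw0 ω))
        · have hn : kn ⌈|h ω|⌉₊ ω = |h ω| := min_eq_left (Nat.le_ceil _)
          calc ENNReal.ofReal (|h ω| * w ω)
              = ENNReal.ofReal (kn ⌈|h ω|⌉₊ ω * w ω) := by rw [hn]
            _ ≤ ⨆ n : ℕ, ENNReal.ofReal (kn n ω * w ω) :=
              le_iSup (fun n => ENNReal.ofReal (kn n ω * w ω)) _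
      have hmeas : ∀ n, Measurable fun ω => ENNReal.ofReal (kn n ω * w ω) :=
        fun n => ENNReal.measurable_ofReal.comp ((hkn_m0 n).mul hwm)
      have hmono : Monotone fun n : ℕ => fun ω => ENNReal.ofReal (kn n ω * w ω) := by
        intro i j hij ω
        exact ENNReal.ofReal_le_ofReal (mul_le_mul_of_nonneg_right
          (min_le_min le_rfl (Nat.cast_le.2 hij)) (hw0 ω))
      have hlim : ∫⁻ ω, ENNReal.ofReal (|h ω| * w ω) ∂P
          = ⨆ n, ∫⁻ ω, ENNReal.ofReal (kn n ω * w ω) ∂P := by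
        rw [← lintegral_iSup hmeas hmono]
        exact lintegral_congr fun ω => (hpt ω).symm
      rw [hlim]
      have hsup_le : (⨆ n, ∫⁻ ω, ENNReal.ofReal (kn n ω * w ω) ∂P)
          ≤ ENNReal.ofReal (∫ ω, |N ω| ∂P) := by
        refine iSup_le fun n => ?_
        rw [← ofReal_integral_eq_lintegral_ofReal (hwint n)
          (ae_of_all _ fun ω => mul_nonneg (hkn_nonneg n ω) (hw0 ω))]
        exact ENNReal.ofReal_le_ofReal (hwle n)
      exact lt_of_le_of_lt hsup_le ENNReal.ofReal_lt_top
  have habs_It_int : Integrable (fun ω => |h ω| * It ω) P :=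
    hMCT It hItm hIt_nonneg hkn_int_It hbound
  have hkn_int_Sp : ∀ n, Integrable (fun ω => kn n ω * Sp ω) P := by
    intro n
    refine Integrable.mono' ((hSt_int.abs).const_mul (n:ℝ))
      (((hkn_m0 n).mul hSpm).aestronglyMeasurable) (ae_of_all _ fun ω => ?_)
    rw [Real.norm_eq_abs, abs_mul, abs_of_nonneg (hkn_nonneg n ω), abs_of_nonneg (hSp_nonneg ω)]
    exact mul_le_mul (hkn_le_cast n ω) (hSp_le_abs ω) (hSp_nonneg ω) (Nat.cast_nonneg n)
  have hbound_Sp : ∀ n, ∫ ω, kn n ω * Sp ω ∂P ≤ ∫ ω, |N ω| ∂P := by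
    intro n
    have heq : ∫ ω, kn n ω * Sp ω ∂P = ∫ ω, kn n ω * St ω ∂P := by
      refine integral_congr_ae ?_
      filter_upwards [hSp_ae] with ω hω
      rw [hω]
    rw [heq, (main (kn n) (hkn_sm n) (hkn_int_It n) (hkn_int_St n)).2]
    exact integral_mono_ae (hknD_int n) hN_int.abs (hknD_le n)
  have habs_Sp_int : Integrable (fun ω => |h ω| * Sp ω) P :=
    hMCT Sp hSpm hSp_nonneg hkn_int_Sp hbound_Sp
  -- the candidate conditional expectation
  set g : Ω → ℝ := fun ω => if t < τ ω then h ω else 0 with hg_def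
  have hg_eq_mul : ∀ ω, g ω = h ω * It ω := by
    intro ω
    by_cases hc : t < τ ω <;> simp [hg_def, hIt_def, hc]
  have hg_m0 : Measurable[m0] g := Measurable.ite (hτset t) hh_m0 measurable_const
  have hg_int : Integrable g P := by
    refine Integrable.mono' habs_It_int hg_m0.aestronglyMeasurable (ae_of_all _ fun ω => ?_)
    rw [hg_eq_mul ω, Real.norm_eq_abs, abs_mul, abs_of_nonneg (hIt_nonneg ω)]
  -- the main set-integral identity on mD-sets
  have hBcase : ∀ B : Set Ω, MeasurableSet[mD] B →
      ∫ ω in B, g ω ∂P = ∫ ω in B, f ω ∂P := by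
    intro B hB
    have hBm0 : MeasurableSet[m0] B := hD0 _ hB
    set kB : Ω → ℝ := B.indicator h with hkB_def
    have hkB_abs_le : ∀ ω, |kB ω| ≤ |h ω| := by
      intro ω
      by_cases hω : ω ∈ B
      · simp [hkB_def, Set.indicator_of_mem hω]
      · simp [hkB_def, Set.indicator_of_notMem hω, abs_nonneg]
    have hkB_sm : StronglyMeasurable[mD] kB := hh_sm.indicator hB
    have hkB_m0 : Measurable[m0] kB := hh_m0.indicator hBm0
    have hkB_It_int : Integrable (fun ω => kB ω * It ω) P := by
      refine Integrable.mono' habs_It_int ((hkB_m0.mul hItm).aestronglyMeasurable)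
        (ae_of_all _ fun ω => ?_)
      rw [Real.norm_eq_abs, abs_mul, abs_of_nonneg (hIt_nonneg ω)]
      exact mul_le_mul_of_nonneg_right (hkB_abs_le ω) (hIt_nonneg ω)
    have hkB_St_int : Integrable (fun ω => kB ω * St ω) P := by
      refine Integrable.mono' habs_Sp_int ((hkB_m0.mul hStm).aestronglyMeasurable) ?_
      filter_upwards [hSt_nonneg] with ω h0
      have h0' : (0:ℝ) ≤ St ω := h0
      rw [Real.norm_eq_abs, abs_mul]
      have hSpSt : |St ω| = Sp ω := by
        rw [abs_of_nonneg h0']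
        show St ω = max (St ω) 0
        rw [max_eq_left h0']
      rw [hSpSt]
      exact mul_le_mul_of_nonneg_right (hkB_abs_le ω) (hSp_nonneg ω)
    have e1 : ∫ ω in B, g ω ∂P = ∫ ω, kB ω * It ω ∂P := by
      rw [← integral_indicator hBm0]
      refine integral_congr_ae (ae_of_all _ fun ω => ?_)
      show B.indicator g ω = kB ω * It ω
      by_cases hω : ω ∈ B
      · rw [Set.indicator_of_mem hω, hkB_def, Set.indicator_of_mem hω, hg_eq_mul ω]
      · rw [Set.indicator_of_notMem hω, hkB_def, Set.indicator_of_notMem hω, zero_mul]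
    have e2 : ∫ ω, kB ω * It ω ∂P = ∫ ω, kB ω * D ω ∂P :=
      (main kB hkB_sm hkB_It_int hkB_St_int).1.trans (main kB hkB_sm hkB_It_int hkB_St_int).2
    have e3 : ∫ ω, kB ω * D ω ∂P = ∫ ω in B, (N ω - A.indicator N ω) ∂P := by
      rw [← integral_indicator hBm0]
      refine integral_congr_ae (ae_of_all _ fun ω => ?_)
      show kB ω * D ω = B.indicator (fun ω => N ω - A.indicator N ω) ω
      by_cases hω : ω ∈ B
      · rw [hkB_def, Set.indicator_of_mem hω, Set.indicator_of_mem hω]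
        by_cases hA : ω ∈ A
        · have hDz : D ω = 0 := hA
          rw [Set.indicator_of_mem hA]
          simp [hh_def, hDz]
        · have hDz : D ω ≠ 0 := hA
          rw [Set.indicator_of_notMem hA, hh_def]
          show N ω / D ω * D ω = N ω - 0
          rw [div_mul_cancel₀ _ hDz, sub_zero]
      · rw [hkB_def, Set.indicator_of_notMem hω, Set.indicator_of_notMem hω, zero_mul]
    have e5 : ∫ ω in B, (N ω - A.indicator N ω) ∂P
        = ∫ ω in B, N ω ∂P - ∫ ω in B, A.indicator N ω ∂P :=
      integral_sub hN_int.integrableOn ((hN_int.indicator hAm0).integrableOn)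
    have e6 : ∫ ω in B, A.indicator N ω ∂P = 0 := by
      rw [setIntegral_indicator hAm0]
      exact hNA B hB
    have hpullθ : P[f|mFθ] =ᵐ[P] fun ω => φ ω * Sθ ω :=
      condExp_mul_of_stronglyMeasurable_left hφ_meas.stronglyMeasurable hf_int hIθ_int
    have e7 : ∫ ω in B, f ω ∂P = ∫ ω in B, N ω ∂P := by
      calc ∫ ω in B, f ω ∂P = ∫ ω in B, (P[f|mFθ]) ω ∂P :=
            (setIntegral_condExp hθ0 hf_int (hDθ _ hB)).symm
        _ = ∫ ω in B, φ ω * Sθ ω ∂P := integral_congr_ae (ae_restrict_of_ae hpullθ)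
        _ = ∫ ω in B, N ω ∂P := (setIntegral_condExp hD0 hφSθ_int hB).symm
    rw [e1, e2, e3, e5, e6, e7, sub_zero]
  -- the generating π-system of mD ⊔ defaultSigma
  have hCg_mem : ∀ s : Set Ω, s ∈ piSys mD τ t ↔
      ∃ B : Set Ω, MeasurableSet[mD] B ∧
        (s = B ∨ ∃ u : ℝ≥0, u ≤ t ∧ s = B ∩ {ω | τ ω ≤ u}) := fun s => Iff.rfl
  have hG_eq : (mD ⊔ defaultSigma τ t) = MeasurableSpace.generateFrom (piSys mD τ t) := by
    apply le_antisymm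
    · refine sup_le ?_ ?_
      · intro s hs
        exact MeasurableSpace.measurableSet_generateFrom ((hCg_mem s).2 ⟨s, hs, Or.inl rfl⟩)
      · rw [defaultSigma]
        refine MeasurableSpace.generateFrom_le ?_
        rintro s ⟨u, hu, rfl⟩
        have huniv : {ω | τ ω ≤ u} = Set.univ ∩ {ω | τ ω ≤ u} := (Set.univ_inter _).symm
        rw [huniv]
        exact MeasurableSpace.measurableSet_generateFrom
          ((hCg_mem _).2 ⟨Set.univ, MeasurableSet.univ, Or.inr ⟨u, hu, rfl⟩⟩)
    · refine MeasurableSpace.generateFrom_le ?_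
      intro s hsmem
      obtain ⟨B, hB, hs | ⟨u, hu, hs⟩⟩ := (hCg_mem s).1 hsmem
      · rw [hs]
        exact (le_sup_left : mD ≤ mD ⊔ defaultSigma τ t) _ hB
      · rw [hs]
        refine ((le_sup_left : mD ≤ mD ⊔ defaultSigma τ t) _ hB).inter ?_
        exact (le_sup_right : defaultSigma τ t ≤ mD ⊔ defaultSigma τ t) _
          (MeasurableSpace.measurableSet_generateFrom ⟨u, hu, rfl⟩)
  have hPi : IsPiSystem (piSys mD τ t) := by
    intro s1 hs1' s2 hs2' hne
    obtain ⟨B1, hB1, hs1⟩ := (hCg_mem s1).1 hs1'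
    obtain ⟨B2, hB2, hs2⟩ := (hCg_mem s2).1 hs2'
    refine (hCg_mem _).2 ?_
    rcases hs1 with h1 | ⟨u1, hu1, h1⟩ <;> rcases hs2 with h2 | ⟨u2, hu2, h2⟩
    · exact ⟨B1 ∩ B2, hB1.inter hB2, Or.inl (by rw [h1, h2])⟩
    · refine ⟨B1 ∩ B2, hB1.inter hB2, Or.inr ⟨u2, hu2, ?_⟩⟩
      rw [h1, h2]
      ext ω
      simp only [Set.mem_inter_iff, Set.mem_setOf_eq]
      tauto
    · refine ⟨B1 ∩ B2, hB1.inter hB2, Or.inr ⟨u1, hu1, ?_⟩⟩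
      rw [h1, h2]
      ext ω
      simp only [Set.mem_inter_iff, Set.mem_setOf_eq]
      tauto
    · refine ⟨B1 ∩ B2, hB1.inter hB2, Or.inr ⟨min u1 u2, le_trans (min_le_left _ _) hu1, ?_⟩⟩
      rw [h1, h2]
      ext ω
      simp only [Set.mem_inter_iff, Set.mem_setOf_eq, le_min_iff]
      tauto
  -- the generator case with a default-observation part
  have hzero_case : ∀ (B : Set Ω) (u : ℝ≥0), MeasurableSet[mD] B → u ≤ t →
      ∫ ω in B ∩ {ω | τ ω ≤ u}, g ω ∂P = ∫ ω in B ∩ {ω | τ ω ≤ u}, f ω ∂P := by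
    intro B u hB hu
    have hm : MeasurableSet[m0] (B ∩ {ω | τ ω ≤ u}) := (hD0 _ hB).inter (hτle u)
    have hgz : Set.EqOn g (fun _ => (0:ℝ)) (B ∩ {ω | τ ω ≤ u}) := by
      rintro ω ⟨-, hω⟩
      have hnot : ¬ t < τ ω := not_lt.2 (le_trans hω hu)
      simp [hg_def, hnot]
    have hfz : Set.EqOn f (fun _ => (0:ℝ)) (B ∩ {ω | τ ω ≤ u}) := by
      rintro ω ⟨-, hω⟩
      have hnot : ¬ θ < τ ω := not_lt.2 (le_trans hω (hu.trans htθ))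
      simp [hf_def, hIθ_def, hnot]
    rw [setIntegral_congr_fun hm hgz, setIntegral_congr_fun hm hfz]
  -- all sets of the sup σ-algebra
  have huniv_eq : ∫ ω, g ω ∂P = ∫ ω, f ω ∂P := by
    have hu := hBcase Set.univ MeasurableSet.univ
    rwa [setIntegral_univ, setIntegral_univ] at hu
  have Qall : ∀ s : Set Ω, MeasurableSet[mD ⊔ defaultSigma τ t] s →
      ∫ ω in s, g ω ∂P = ∫ ω in s, f ω ∂P := by
    intro s hs
    refine MeasurableSpace.induction_on_inter
      (m := mD ⊔ defaultSigma τ t)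
      (C := fun s _ => ∫ ω in s, g ω ∂P = ∫ ω in s, f ω ∂P)
      hG_eq hPi ?_ ?_ ?_ ?_ s hs
    · simp
    · intro s' hs'
      obtain ⟨B, hB, hseq | ⟨u, hu, hseq⟩⟩ := (hCg_mem s').1 hs'
      · rw [hseq]; exact hBcase B hB
      · rw [hseq]; exact hzero_case B u hB hu
    · intro s' hs' hQ
      have hs0 : MeasurableSet[m0] s' := hG_le _ hs'
      have hg' := integral_add_compl hs0 hg_int
      have hf' := integral_add_compl hs0 hf_int
      linarith
    · intro seq hdisj hmeas hQ
      have hm0s : ∀ i, MeasurableSet[m0] (seq i) := fun i => hG_le _ (hmeas i)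
      rw [integral_iUnion hm0s hdisj hg_int.integrableOn,
          integral_iUnion hm0s hdisj hf_int.integrableOn]
      exact tsum_congr hQ
  -- strong measurability of g w.r.t. the sup σ-algebra
  have hgmG : StronglyMeasurable[mD ⊔ defaultSigma τ t] g := by
    have h1 : MeasurableSet[defaultSigma τ t] {ω | τ ω ≤ t} :=
      MeasurableSpace.measurableSet_generateFrom ⟨t, le_rfl, rfl⟩
    have hτG : MeasurableSet[mD ⊔ defaultSigma τ t] {ω | t < τ ω} := by
      have h2 : {ω | t < τ ω} = {ω | τ ω ≤ t}ᶜ := by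
        ext ω; simp [not_le]
      rw [h2]
      exact ((le_sup_right : defaultSigma τ t ≤ mD ⊔ defaultSigma τ t) _ h1).compl
    exact StronglyMeasurable.ite hτG (hh_sm.mono le_sup_left) stronglyMeasurable_const
  have hfinal := ae_eq_condExp_of_forall_setIntegral_eq hG_le hf_int
    (fun s _ _ => hg_int.integrableOn) (fun s hs _ => Qall s hs)
    hgmG.aestronglyMeasurable
  constructor
  · have hset : {ω | t < τ ω ∧ D ω = 0} = {ω | t < τ ω} ∩ A := rfl
    rw [hset]
    exact part1
  · exact hfinal.symm

/-- **Proposition 4.2, first formula.** For the delayed-information investor, for all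
`0 ≤ t ≤ θ` and every integrable `F_θ`-measurable `φ_θ`, one has
`P(τ > t, E[S_t | F^D_t] = 0) = 0` and, `P`-a.s.,
`E_P[φ_θ 1_{τ > θ} | G^D_t] = 1_{τ > t} E_P[φ_θ S_θ | F^D_t] / E_P[S_t | F^D_t]` (the
right-hand side being `0` on `{τ ≤ t}`). -/
theorem delayed_information_key_lemma
    {Ω : Type*} [m0 : MeasurableSpace Ω] {P : Measure Ω} [IsProbabilityMeasure P]
    (F : Filtration ℝ≥0 m0)
    (X : ℝ≥0 → Ω → ℝ) (hX_adapted : Adapted F X)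
    (hX_cont : ∀ ω, Continuous fun s => X s ω)
    (L : Ω → ℝ) (hL : Measurable L)
    (hX0 : ∀ᵐ ω ∂P, L ω < X 0 ω)
    (τ : Ω → ℝ≥0)
    (hτ : ∀ (θ : ℝ≥0) (ω : Ω), θ < τ ω ↔ L ω < runInf X θ ω)
    -- the delayed default-free filtration, a sub-filtration of `F`
    (FD : Filtration ℝ≥0 m0) (hFD : ∀ s, FD s ≤ F s)
    (t θ : ℝ≥0) (htθ : t ≤ θ)
    (φ : Ω → ℝ) (hφ_meas : Measurable[F θ] φ) (hφ_int : Integrable φ P) :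
    P {ω | t < τ ω ∧ (P[azema P F τ t|FD t]) ω = 0} = 0 ∧
    (P[fun ω => φ ω * (if θ < τ ω then 1 else 0)|FD t ⊔ defaultSigma τ t]) =ᵐ[P]
      fun ω => if t < τ ω then
        (P[fun ω' => φ ω' * azema P F τ θ ω'|FD t]) ω / (P[azema P F τ t|FD t]) ω
      else 0 := by
  have hXm : ∀ s, Measurable (X s) := fun s => (hX_adapted s).mono (F.le s) le_rfl
  have hτset : ∀ u : ℝ≥0, MeasurableSet {ω | u < τ ω} := by
    intro u
    have : {ω | u < τ ω} = {ω | L ω < runInf X u ω} := by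
      ext ω; exact hτ u ω
    rw [this]
    exact measurableSet_lt hL (measurable_runInf X hX_cont hXm u)
  have := key_aux (F t) (F θ) (FD t) (hFD t) (F.mono htθ) (F.le θ) τ t θ htθ hτset
    φ hφ_meas hφ_int
  simpa only [azema] using this
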